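/- Let F be a field, n ≥ 1, and let T : Mₙ(F) → Mₙ(F) be the trace of an n-linear function F₀ (i.e., T(x) = F₀(x,...,x)). Suppose F₀(1,...,1) = 1 and char(F) = 0 or char(F) > n. If there exist multilinear functions F₁,...,Fₙ : Mₙ(F)ⁿ → Mₙ(F) such that Σ_{k=1}^{n} Fₖ(x₁,...,x̂ₖ,...,x_{n+1}) xₖ + F₀(x₁,...,xₙ) x_{n+1} = 0 for all x₁,...,x_{n+1} ∈ Mₙ(F), then T(x) = det(x)·1 for all x ∈ Mₙ(F). -/

import Mathlib

open Matrix

/-- Characterization of the determinant via a left-sided functional identity: if `F₀` is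
`n`-linear with `F₀(1,...,1) = 1` and there are multilinear `F₁,...,Fₙ` with
`Σₖ Fₖ(x₁,...,x̂ₖ,...,x_{n+1})xₖ + F₀(x₁,...,xₙ)x_{n+1} = 0` on `Mₙ(F)`
(`char F = 0` or `char F > n`), then the trace of `F₀` is `det(x)·1`. -/
theorem trace_eq_det_of_leftFI {F : Type*} [Field F] (n : ℕ) (hn : 1 ≤ n)
    (hchar : ∀ p : ℕ, CharP F p → p = 0 ∨ n < p)
    (F₀ : MultilinearMap F (fun _ : Fin n => Matrix (Fin n) (Fin n) F)
      (Matrix (Fin n) (Fin n) F))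
    (hone : F₀ (fun _ => 1) = 1)
    (hFI : ∃ G : Fin n → MultilinearMap F (fun _ : Fin n => Matrix (Fin n) (Fin n) F)
        (Matrix (Fin n) (Fin n) F),
      ∀ x : Fin (n + 1) → Matrix (Fin n) (Fin n) F,
        (∑ k : Fin n, G k (fun i => x ((k.castSucc).succAbove i)) * x k.castSucc) +
          F₀ (fun i => x i.castSucc) * x (Fin.last n) = 0) :
    ∀ x : Matrix (Fin n) (Fin n) F, F₀ (fun _ => x) = Matrix.det x • 1 := by
  classical
  obtain ⟨G, hG⟩ := hFI
  -- Basic substitution: for any x : Fin n → M and y,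
  --   (∑ k, G k (...) * x k) + F₀ x * y = 0
  have hsub : ∀ (x : Fin n → Matrix (Fin n) (Fin n) F) (y : Matrix (Fin n) (Fin n) F),
      (∑ k : Fin n, G k (fun i => (Fin.snoc x y : Fin (n+1) → Matrix (Fin n) (Fin n) F) ((k.castSucc).succAbove i)) * x k) +
        F₀ x * y = 0 := by
    intro x y
    have h := hG (Fin.snoc x y)
    simpa only [Fin.snoc_castSucc, Fin.snoc_last] using h
  -- L1: vanishing lemma
  have L1 : ∀ (x : Fin n → Matrix (Fin n) (Fin n) F) (w : Fin n → F), w ≠ 0 →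
      (∀ k, x k *ᵥ w = 0) → F₀ x = 0 := by
    intro x w hw hxw
    have key : ∀ u : Fin n → F, F₀ x *ᵥ u = 0 := by
      intro u
      obtain ⟨j, hj⟩ : ∃ j, w j ≠ 0 := by
        by_contra h; push_neg at h; exact hw (funext fun j => h j)
      set y : Matrix (Fin n) (Fin n) F :=
        Matrix.of (fun a b => if b = j then (w j)⁻¹ * u a else 0) with hy
      have hyw : y *ᵥ w = u := by
        funext a
        simp only [Matrix.mulVec, dotProduct, hy, Matrix.of_apply]
        rw [Finset.sum_eq_single j]
        · rw [if_pos rfl]; field_simp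
        · intro b _ hb; simp [hb]
        · simp
      have h := congrArg (fun M => M *ᵥ w) (hsub x y)
      simp only [Matrix.add_mulVec, Matrix.zero_mulVec] at h
      have hterm : ∀ k : Fin n,
          (G k (fun i => (Fin.snoc x y : Fin (n+1) → Matrix (Fin n) (Fin n) F) ((k.castSucc).succAbove i)) * x k) *ᵥ w = 0 := by
        intro k
        rw [← Matrix.mulVec_mulVec, hxw k, Matrix.mulVec_zero]
      have hsv : (∑ k : Fin n, ((G k) fun i => (Fin.snoc x y : Fin (n+1) → Matrix (Fin n) (Fin n) F) (k.castSucc.succAbove i)) * x k) *ᵥ w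
          = ∑ k : Fin n, (((G k) fun i => (Fin.snoc x y : Fin (n+1) → Matrix (Fin n) (Fin n) F) (k.castSucc.succAbove i)) * x k) *ᵥ w := by
        funext a
        simp only [Matrix.mulVec, dotProduct, Matrix.sum_apply, Finset.sum_mul, Finset.sum_apply]
        exact Finset.sum_comm
      rw [hsv] at h
      simp only [hterm, Finset.sum_const_zero, zero_add] at h
      calc F₀ x *ᵥ u = F₀ x *ᵥ (y *ᵥ w) := by rw [hyw]
        _ = (F₀ x * y) *ᵥ w := (Matrix.mulVec_mulVec _ _ _)
        _ = 0 := h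
    ext a b
    have h := congrFun (key (Pi.single b 1)) a
    simpa [Matrix.mulVec, dotProduct, Pi.single_apply] using h
  -- place a vector in column j
  let colLin : Fin n → ((Fin n → F) →ₗ[F] Matrix (Fin n) (Fin n) F) := fun j =>
    { toFun := fun c => Matrix.of fun a b => if b = j then c a else 0
      map_add' := by
        intro c d; ext a b; by_cases h : b = j <;> simp [h]
      map_smul' := by
        intro r c; ext a b; by_cases h : b = j <;> simp [h] }
  have colLin_apply : ∀ j c a b, colLin j c a b = if b = j then c a else 0 := by
    intro j c a b; rfl
  -- Lemma A : expansion of the trace into column pieces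
  have lemA : ∀ c : Fin n → (Fin n → F),
      F₀ (fun _ => Matrix.of fun a b => c b a)
        = ∑ f : Fin n → Fin n, F₀ (fun i => colLin (f i) (c (f i))) := by
    intro c
    have hx : (fun _ : Fin n => Matrix.of fun a b => c b a)
        = fun _ : Fin n => ∑ j : Fin n, colLin j (c j) := by
      funext i
      ext a b
      simp [colLin_apply, Matrix.sum_apply]
    rw [hx]
    exact F₀.map_sum (g := fun (_ : Fin n) (j : Fin n) => colLin j (c j))
  -- Lemma B : non-injective column assignments vanish
  have lemB : ∀ f : Fin n → Fin n, ¬ Function.Injective f →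
      ∀ c : Fin n → (Fin n → F), F₀ (fun i => colLin (f i) (c (f i))) = 0 := by
    intro f hf c
    have hfs : ¬ Function.Surjective f := fun hs =>
      hf (Finite.injective_iff_surjective.mpr hs)
    obtain ⟨j₀, hj₀⟩ : ∃ j₀, ∀ k, f k ≠ j₀ := by
      simp only [Function.Surjective, not_forall] at hfs
      obtain ⟨j₀, hj₀⟩ := hfs
      exact ⟨j₀, fun k hk => hj₀ ⟨k, hk⟩⟩
    refine L1 _ (Pi.single j₀ 1) ?_ ?_
    · intro h
      have := congrFun h j₀
      simp at this
    · intro k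
      funext a
      simp only [Matrix.mulVec, dotProduct, colLin_apply]
      rw [Finset.sum_eq_single (f k)]
      · simp [Pi.single_apply, hj₀ k]
      · intro b _ hb; simp [hb]
      · simp
  -- The multilinear map N on columns
  let NM : MultilinearMap F (fun _ : Fin n => (Fin n → F)) (Matrix (Fin n) (Fin n) F) :=
    ∑ σ : Equiv.Perm (Fin n),
      ((F₀.compLinearMap fun i => colLin (σ i)).domDomCongr σ)
  have NM_apply : ∀ c, NM c = ∑ σ : Equiv.Perm (Fin n),
      F₀ (fun i => colLin (σ i) (c (σ i))) := by
    intro c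
    simp only [NM, MultilinearMap.sum_apply, MultilinearMap.domDomCongr_apply,
      MultilinearMap.compLinearMap_apply]
  -- Lemma C : sum over all functions equals sum over permutations
  have lemC : ∀ c : Fin n → (Fin n → F),
      NM c = ∑ f : Fin n → Fin n, F₀ (fun i => colLin (f i) (c (f i))) := by
    intro c
    rw [NM_apply]
    rw [← Finset.sum_filter_of_ne
      (p := fun f : Fin n → Fin n => Function.Bijective f)
      (f := fun f => F₀ (fun i => colLin (f i) (c (f i))))
      (by
        intro f _ hf
        by_contra hbij
        exact hf (lemB f (fun hinj => hbij (Finite.injective_iff_bijective.mp hinj)) c))]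
    refine Finset.sum_bij (fun (σ : Equiv.Perm (Fin n)) _ => (σ : Fin n → Fin n)) ?_ ?_ ?_ ?_
    · intro σ _
      exact Finset.mem_filter.mpr ⟨Finset.mem_univ _, σ.bijective⟩
    · intro σ _ τ _ h
      exact Equiv.coe_fn_injective h
    · intro f hf
      simp only [Finset.mem_filter] at hf
      exact ⟨Equiv.ofBijective f hf.2, Finset.mem_univ _, rfl⟩
    · intro σ _
      rfl
  have lemD : ∀ c : Fin n → (Fin n → F),
      NM c = F₀ (fun _ => Matrix.of fun a b => c b a) := by
    intro c
    rw [lemA c, lemC c]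
  -- N as an alternating map
  let N : (Fin n → F) [⋀^Fin n]→ₗ[F] Matrix (Fin n) (Fin n) F :=
    { toMultilinearMap := NM
      map_eq_zero_of_eq' := by
        intro c i j hcij hij
        show NM c = 0
        rw [lemD c]
        refine L1 _ (Pi.single i 1 - Pi.single j 1) ?_ ?_
        · intro h
          have := congrFun h i
          simp [Pi.single_apply, hij] at this
        · intro k
          funext a
          have hc : c i a = c j a := congrFun hcij a
          simp only [Matrix.mulVec, dotProduct, Matrix.of_apply, Pi.sub_apply,
            Pi.single_apply, mul_sub, Finset.sum_sub_distrib, mul_ite, mul_one,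
            mul_zero]
          rw [Finset.sum_ite_eq' Finset.univ i (fun b => c b a),
            Finset.sum_ite_eq' Finset.univ j (fun b => c b a)]
          simp [hc] }
  -- the determinant alternating map with values in scalar matrices
  let detAlt : (Fin n → F) [⋀^Fin n]→ₗ[F] Matrix (Fin n) (Fin n) F :=
    (LinearMap.toSpanSingleton F (Matrix (Fin n) (Fin n) F) 1).compAlternatingMap
      Matrix.detRowAlternating
  have detAlt_apply : ∀ c : Fin n → (Fin n → F), detAlt c = (Matrix.of c).det • 1 := by
    intro c; rfl
  have e_apply : ∀ b a : Fin n, (Pi.basisFun F (Fin n)) b a = if a = b then 1 else 0 := by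
    intro b a
    simp [Pi.basisFun_apply, Pi.single_apply]
  have hN : N = detAlt := by
    apply Module.Basis.ext_alternating (Pi.basisFun F (Fin n))
    intro v hv
    have hb := Finite.injective_iff_bijective.mp hv
    have hvσ : (fun i => (Pi.basisFun F (Fin n)) (v i))
        = (⇑(Pi.basisFun F (Fin n)) ∘ ⇑(Equiv.ofBijective v hb)) := rfl
    rw [hvσ, N.map_perm, detAlt.map_perm]
    congr 1
    have h1 : N ⇑(Pi.basisFun F (Fin n)) = 1 := by
      show NM ⇑(Pi.basisFun F (Fin n)) = 1
      rw [lemD]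
      have : (Matrix.of fun a b => (Pi.basisFun F (Fin n)) b a)
          = (1 : Matrix (Fin n) (Fin n) F) := by
        ext a b
        simp [e_apply, Matrix.one_apply]
      rw [this, hone]
    have h2 : detAlt ⇑(Pi.basisFun F (Fin n)) = 1 := by
      rw [detAlt_apply]
      have : Matrix.of ⇑(Pi.basisFun F (Fin n)) = (1 : Matrix (Fin n) (Fin n) F) := by
        ext a b
        simp [e_apply, Matrix.one_apply, eq_comm]
      rw [this, Matrix.det_one, one_smul]
    rw [h1, h2]
  intro x
  calc F₀ (fun _ => x) = NM (fun j a => x a j) := (lemD _).symm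
    _ = detAlt (fun j a => x a j) := by rw [show NM (fun j a => x a j) = N (fun j a => x a j) from rfl, hN]
    _ = (Matrix.of fun j a => x a j).det • 1 := detAlt_apply _
    _ = x.det • 1 := by rw [show (Matrix.of fun j a => x a j) = x.transpose from rfl, Matrix.det_transpose]
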